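/- Fix α > 0 and let f be the function determined by 1/f(z) = (1/(2π))·[ log((z+α)/z) + (2π−α)/(z+α) ] for z in the upper half-plane, extended continuously to the real axis near 0 from above, and write f(x) = u(x) + i·v(x) for real x < 0 near 0. Then the curve traced by (u(x), v(x)) satisfies the asymptotic relation v(x) = u(x)²/2 + o(u(x)²) as x → 0⁻ (equivalently, v = u²/2 + o(u²) as u → 0⁺ along the curve). -/

import Mathlib

open Complex Filter Topology

/-- The Christoffel–Schwarz map `f` of the paper:
`1/f(z) = (1/(2π))·[log(z+α) − log z + (2π−α)/(z+α)]`, where `Complex.log`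
is the branch with `log i = iπ/2` (the continuous extension to the real axis from above,
with `log((z+α)/z) = log(z+α) − log z` on the upper half-plane). -/
noncomputable def fCS (α : ℝ) (z : ℂ) : ℂ :=
  2 * (Real.pi : ℂ) /
    (Complex.log (z + (α : ℂ)) - Complex.log z + ((2 * Real.pi - α : ℝ) : ℂ) / (z + (α : ℂ)))

/-- The real part of `1/f(x)·2π` for `x < 0`: `L(x) = log(x+α) − log|x| + (2π−α)/(x+α)`. -/
noncomputable def Laux (α x : ℝ) : ℝ :=
  Real.log (x + α) - Real.log |x| + (2 * Real.pi - α) / (x + α)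

lemma fCS_eq (α : ℝ) (x : ℝ) (hx : x < 0) (hxa : 0 < x + α) :
    (2 * (Real.pi : ℂ) /
      (Complex.log ((x:ℂ) + (α : ℂ)) - Complex.log (x:ℂ) + ((2 * Real.pi - α : ℝ) : ℂ) / ((x:ℂ) + (α : ℂ))))
    = ((2 * Real.pi * Laux α x / ((Laux α x)^2 + Real.pi^2) : ℝ) : ℂ)
      + ((2 * Real.pi^2 / ((Laux α x)^2 + Real.pi^2) : ℝ) : ℂ) * I := by
  have h1 : Complex.log ((x:ℂ) + (α:ℂ)) = ((Real.log (x + α) : ℝ) : ℂ) := by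
    rw [← Complex.ofReal_add, Complex.ofReal_log hxa.le]
  have h2 : Complex.log (x:ℂ) = ((Real.log |x| : ℝ) : ℂ) + Real.pi * I := by
    rw [Complex.log, Complex.norm_real, Real.norm_eq_abs, Complex.arg_ofReal_of_neg hx]
  have h3 : ((2 * Real.pi - α : ℝ) : ℂ) / ((x:ℂ) + (α:ℂ))
      = (((2 * Real.pi - α) / (x + α) : ℝ) : ℂ) := by push_cast; ring
  rw [h1, h2, h3]
  have hden : ((Real.log (x + α) : ℝ) : ℂ) - (((Real.log |x| : ℝ) : ℂ) + Real.pi * I)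
      + (((2 * Real.pi - α) / (x + α) : ℝ) : ℂ) = ((Laux α x : ℝ) : ℂ) - Real.pi * I := by
    unfold Laux; push_cast; ring
  rw [hden]
  have hD : (Laux α x)^2 + Real.pi^2 ≠ 0 := by positivity
  have hc : ((Laux α x : ℝ) : ℂ) - Real.pi * I ≠ 0 := by
    intro h
    have := congrArg Complex.im h
    simp at this
  rw [div_eq_iff hc, Complex.ext_iff]
  set L := Laux α x with hLdef
  set a : ℝ := 2 * Real.pi * L / (L ^ 2 + Real.pi ^ 2) with ha
  set b : ℝ := 2 * Real.pi ^ 2 / (L ^ 2 + Real.pi ^ 2) with hb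
  constructor <;>
    simp only [Complex.add_re, Complex.add_im, Complex.sub_re, Complex.sub_im,
      Complex.mul_re, Complex.mul_im, Complex.ofReal_re, Complex.ofReal_im,
      Complex.I_re, Complex.I_im, Complex.re_ofNat, Complex.im_ofNat] <;>
    rw [ha, hb] <;> field_simp <;> ring

lemma Laux_tendsto (α : ℝ) (hα : 0 < α) :
    Tendsto (fun x => Laux α x) (𝓝[<] (0:ℝ)) atTop := by
  have habs : Tendsto (fun x : ℝ => |x|) (𝓝[<] (0:ℝ)) (𝓝[>] (0:ℝ)) := by
    rw [tendsto_nhdsWithin_iff]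
    constructor
    · have := ((continuous_abs : Continuous (fun x : ℝ => |x|))).tendsto (0:ℝ)
        |>.mono_left (nhdsWithin_le_nhds (s := Set.Iio 0))
      simpa using this
    · filter_upwards [self_mem_nhdsWithin] with x hx
      exact abs_pos.mpr (ne_of_lt (Set.mem_Iio.mp hx))
  have h1 : Tendsto (fun x : ℝ => -Real.log |x|) (𝓝[<] (0:ℝ)) atTop := by
    have := (Real.tendsto_log_nhdsGT_zero).comp habs
    exact tendsto_neg_atBot_atTop.comp this
  have h2 : Tendsto (fun x : ℝ => Real.log (x + α) + (2 * Real.pi - α) / (x + α))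
      (𝓝[<] (0:ℝ)) (𝓝 (Real.log α + (2 * Real.pi - α) / α)) := by
    have hc : ContinuousAt (fun x : ℝ => Real.log (x + α) + (2 * Real.pi - α) / (x + α)) 0 := by
      apply ContinuousAt.add
      · exact (Real.continuousAt_log (by simpa using hα.ne')).comp
          (by fun_prop : ContinuousAt (fun x : ℝ => x + α) 0)
      · exact ContinuousAt.div continuousAt_const (by fun_prop) (by simpa using hα.ne')
    have := hc.tendsto.mono_left (nhdsWithin_le_nhds (s := Set.Iio 0))
    simpa using this
  have : Tendsto (fun x : ℝ => (Real.log (x + α) + (2 * Real.pi - α) / (x + α)) + -Real.log |x|)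
      (𝓝[<] (0:ℝ)) atTop := h2.add_atTop h1
  refine this.congr (fun x => ?_)
  unfold Laux; ring

/-- The circular arc traced by `x ↦ f(x) = u(x) + i v(x)`, `x < 0`, satisfies
`v = u²/2 + o(u²)` as `x → 0⁻`. -/
theorem stmt6 (α : ℝ) (hα : 0 < α) :
    (fun x : ℝ => (fCS α (x : ℂ)).im - ((fCS α (x : ℂ)).re) ^ 2 / 2)
      =o[nhdsWithin 0 (Set.Iio (0 : ℝ))] (fun x : ℝ => ((fCS α (x : ℂ)).re) ^ 2) := by
  have hmem : Set.Ioo (-α) 0 ∈ 𝓝[<] (0:ℝ) := Ioo_mem_nhdsLT (by linarith)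
  have hL := Laux_tendsto α hα
  have hLpos : ∀ᶠ (x : ℝ) in 𝓝[<] (0:ℝ), 0 < Laux α x := hL.eventually_gt_atTop 0
  have hform : ∀ᶠ (x : ℝ) in 𝓝[<] (0:ℝ),
      (fCS α (x:ℂ)).re = 2 * Real.pi * Laux α x / ((Laux α x)^2 + Real.pi^2) ∧
      (fCS α (x:ℂ)).im = 2 * Real.pi^2 / ((Laux α x)^2 + Real.pi^2) := by
    filter_upwards [hmem] with x hx
    have h := fCS_eq α x hx.2 (by have := hx.1; linarith)
    rw [fCS, h]
    constructor <;>
      simp only [Complex.add_re, Complex.add_im, Complex.mul_re, Complex.mul_im,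
        Complex.ofReal_re, Complex.ofReal_im, Complex.I_re, Complex.I_im] <;> ring
  have hrepos : ∀ᶠ (x : ℝ) in 𝓝[<] (0:ℝ), 0 < (fCS α (x:ℂ)).re := by
    filter_upwards [hform, hLpos] with x hf hLp
    rw [hf.1]
    have : (0:ℝ) < (Laux α x)^2 + Real.pi^2 := by positivity
    exact div_pos (by positivity) this
  rw [Asymptotics.isLittleO_iff_tendsto']
  · have hratio : (fun x : ℝ => ((fCS α (x:ℂ)).im - ((fCS α (x:ℂ)).re)^2/2) / (((fCS α (x:ℂ)).re)^2))
        =ᶠ[𝓝[<] (0:ℝ)] fun x => Real.pi^2 / (2 * (Laux α x)^2) := by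
      filter_upwards [hform, hLpos] with x hf hLp
      rw [hf.1, hf.2]
      have hD : (Laux α x)^2 + Real.pi^2 ≠ 0 := by positivity
      have hLne : Laux α x ≠ 0 := hLp.ne'
      have hpi : Real.pi ≠ 0 := Real.pi_ne_zero
      field_simp
      ring
    have h2L : Tendsto (fun x => 2 * (Laux α x)^2) (𝓝[<] (0:ℝ)) atTop := by
      have hsq : Tendsto (fun x => (Laux α x)^2) (𝓝[<] (0:ℝ)) atTop := by
        have := hL.atTop_mul_atTop₀ hL
        exact this.congr (fun x => (sq (Laux α x)).symm)
      exact hsq.const_mul_atTop (by norm_num)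
    have h0 : Tendsto (fun x => Real.pi^2 / (2 * (Laux α x)^2)) (𝓝[<] (0:ℝ)) (𝓝 0) :=
      Tendsto.div_atTop tendsto_const_nhds h2L
    exact h0.congr' hratio.symm
  · filter_upwards [hrepos] with x hx h
    exact absurd h (by positivity)
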